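/- For all n, k ∈ ℕ with k ≥ 2, we have s_k(n) ≤ 1/t!, where t = ⌊n/(k-1)⌋ and s_k(n) is the probability that a uniformly random permutation of an n-set has all cycles of length strictly less than k. -/

import Mathlib

open Function Equiv Finset

namespace ShortCycleAux

lemma minPer_conj {α β : Type*} (e : α ≃ β) (σ : Equiv.Perm α) (x : α) :
    minimalPeriod ⇑((e.symm.trans σ).trans e : Equiv.Perm β) (e x) = minimalPeriod ⇑σ x := by
  rw [Function.minimalPeriod_eq_minimalPeriod_iff]
  intro m
  have hsc : Semiconj ⇑e ⇑σ ⇑((e.symm.trans σ).trans e : Equiv.Perm β) := by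
    intro a; simp
  have h2 := (hsc.iterate_right m) x
  unfold IsPeriodicPt IsFixedPt
  rw [← h2]
  exact ⟨fun hh => e.injective hh, fun hh => congrArg e hh⟩

lemma minPer_subtypePerm {α : Type*} {p : α → Prop} (σ : Equiv.Perm α)
    (h : ∀ x, p x ↔ p (σ x)) (x : {x // p x}) :
    minimalPeriod ⇑(σ.subtypePerm (fun x => (h x).symm)) x = minimalPeriod ⇑σ ↑x := by
  rw [Function.minimalPeriod_eq_minimalPeriod_iff]
  intro m
  have hsc : Semiconj (Subtype.val : {x // p x} → α) ⇑(σ.subtypePerm (fun x => (h x).symm)) ⇑σ := fun a => rfl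
  have h2 := (hsc.iterate_right m) x
  unfold IsPeriodicPt IsFixedPt
  rw [← Subtype.coe_inj, h2]

lemma perm_minPer_pos {n : ℕ} (σ : Equiv.Perm (Fin n)) (x : Fin n) :
    0 < minimalPeriod ⇑σ x := by
  refine IsPeriodicPt.minimalPeriod_pos (orderOf_pos σ) ?_
  show (⇑σ)^[orderOf σ] x = x
  rw [Equiv.Perm.iterate_eq_pow, pow_orderOf_eq_one]
  rfl

noncomputable def A (k n : ℕ) : ℕ :=
  Nat.card {σ : Equiv.Perm (Fin n) // ∀ x, Function.minimalPeriod (⇑σ) x < k}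

lemma A_le (k n : ℕ) : A k n ≤ n.factorial := by
  have h : A k n ≤ Nat.card (Equiv.Perm (Fin n)) :=
    Nat.card_le_card_of_injective Subtype.val Subtype.val_injective
  simpa [Nat.card_eq_fintype_card, Fintype.card_perm] using h

lemma natCard_sigma {ι : Type*} [Fintype ι] (f : ι → Type*) [∀ i, Finite (f i)] :
    Nat.card (Σ i, f i) = ∑ i, Nat.card (f i) := by
  letI : ∀ i, Fintype (f i) := fun i => Fintype.ofFinite _
  simp [Nat.card_eq_fintype_card, Fintype.card_sigma]

noncomputable def rho {n m : ℕ} (s : Finset (Fin n)) (hcs : sᶜ.card = m)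
    (σ : Equiv.Perm (Fin n)) (hσ : ∀ x, x ∈ sᶜ ↔ σ x ∈ sᶜ) : Equiv.Perm (Fin m) :=
  (((sᶜ.equivFin.trans (finCongr hcs)).symm.trans (σ.subtypePerm (fun x => (hσ x).symm))).trans
    (sᶜ.equivFin.trans (finCongr hcs)))

lemma rho_minPer_lt {k n m : ℕ} (s : Finset (Fin n)) (hcs : sᶜ.card = m)
    (σ : Equiv.Perm (Fin n)) (hσ : ∀ x, x ∈ sᶜ ↔ σ x ∈ sᶜ)
    (hσk : ∀ x, minimalPeriod ⇑σ x < k) (y : Fin m) :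
    minimalPeriod ⇑(rho s hcs σ hσ) y < k := by
  set e := sᶜ.equivFin.trans (finCongr hcs) with he
  have h1 : y = e (e.symm y) := (e.apply_symm_apply y).symm
  rw [rho, ← he, h1, minPer_conj e (σ.subtypePerm (fun x => (hσ x).symm)) (e.symm y),
    minPer_subtypePerm σ hσ]
  exact hσk _

lemma rho_congr {n m : ℕ} (s t : Finset (Fin n)) (hst : s = t) (hcs : sᶜ.card = m)
    (hct : tᶜ.card = m) (σ : Equiv.Perm (Fin n)) (hσs : ∀ x, x ∈ sᶜ ↔ σ x ∈ sᶜ)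
    (hσt : ∀ x, x ∈ tᶜ ↔ σ x ∈ tᶜ) : rho s hcs σ hσs = rho t hct σ hσt := by
  subst hst; rfl

lemma rho_eq_imp {n m : ℕ} (s : Finset (Fin n)) (hcs hcs' : sᶜ.card = m)
    (σ τ : Equiv.Perm (Fin n)) (hσ : ∀ x, x ∈ sᶜ ↔ σ x ∈ sᶜ)
    (hτ : ∀ x, x ∈ sᶜ ↔ τ x ∈ sᶜ)
    (h : rho s hcs σ hσ = rho s hcs' τ hτ) {x : Fin n} (hx : x ∈ sᶜ) : σ x = τ x := by
  set e := sᶜ.equivFin.trans (finCongr hcs) with he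
  have hcc : hcs = hcs' := rfl
  subst hcc
  have h2 := congrArg (fun ρ : Equiv.Perm (Fin m) => e.symm (ρ (e ⟨x, hx⟩))) h
  simp only [rho, ← he, Equiv.trans_apply, Equiv.symm_apply_apply] at h2
  exact Subtype.ext_iff.mp h2

end ShortCycleAux

namespace ShortCycleAux

def orb {n : ℕ} (σ : Equiv.Perm (Fin n)) (a : Fin n) (p : ℕ) : Finset (Fin n) :=
  (Finset.range p).image (fun i => (⇑σ)^[i] a)

lemma mem_orb_iff {n : ℕ} {σ : Equiv.Perm (Fin n)} {a x : Fin n} {p : ℕ} :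
    x ∈ orb σ a p ↔ ∃ i < p, (⇑σ)^[i] a = x := by
  simp [orb, Finset.mem_image, Finset.mem_range]

lemma orb_card {n p : ℕ} (σ : Equiv.Perm (Fin n)) (a : Fin n)
    (hpa : minimalPeriod ⇑σ a = p) : (orb σ a p).card = p := by
  rw [orb, Finset.card_image_of_injOn, Finset.card_range]
  rw [Finset.coe_range]
  exact hpa ▸ Function.iterate_injOn_Iio_minimalPeriod

lemma orb_stab {n p : ℕ} (σ : Equiv.Perm (Fin n)) (a : Fin n) (hp : 0 < p)
    (hpa : (⇑σ)^[p] a = a) (x : Fin n) :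
    σ x ∈ orb σ a p ↔ x ∈ orb σ a p := by
  simp only [mem_orb_iff]
  constructor
  · rintro ⟨i, hi, hix⟩
    rcases Nat.eq_zero_or_pos i with rfl | hi0
    · refine ⟨p - 1, by omega, ?_⟩
      apply σ.injective
      rw [← Function.iterate_succ_apply' (⇑σ) (p-1) a, show (p - 1).succ = p by omega, hpa]
      exact hix
    · refine ⟨i - 1, by omega, ?_⟩
      apply σ.injective
      rw [← Function.iterate_succ_apply' (⇑σ) (i-1) a, show (i - 1).succ = i by omega]
      exact hix
  · rintro ⟨i, hi, rfl⟩
    rcases Nat.lt_or_ge (i + 1) p with h | h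
    · exact ⟨i + 1, h, Function.iterate_succ_apply' (⇑σ) i a⟩
    · have h1 : i + 1 = p := by omega
      refine ⟨0, hp, ?_⟩
      have h2 : (⇑σ)^[i+1] a = σ ((⇑σ)^[i] a) := Function.iterate_succ_apply' (⇑σ) i a
      simp only [Function.iterate_zero_apply]
      rw [← h2, h1, hpa]

lemma orb_stab' {n p : ℕ} (σ : Equiv.Perm (Fin n)) (a : Fin n) (hp : 0 < p)
    (hpa : (⇑σ)^[p] a = a) (x : Fin n) :
    x ∈ (orb σ a p)ᶜ ↔ σ x ∈ (orb σ a p)ᶜ := by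
  simp only [Finset.mem_compl]
  exact not_congr (orb_stab σ a hp hpa x).symm

end ShortCycleAux

namespace ShortCycleAux

lemma card_fixed_j (k n j : ℕ) (hn : 0 < n) (_hj : j + 1 < k) :
    Nat.card {σ : Equiv.Perm (Fin n) // (∀ x, minimalPeriod ⇑σ x < k) ∧
        minimalPeriod ⇑σ ⟨0, hn⟩ = j + 1}
      ≤ (n - 1).descFactorial j * A k (n - 1 - j) := by
  set a : Fin n := ⟨0, hn⟩ with ha
  set S := {σ : Equiv.Perm (Fin n) // (∀ x, minimalPeriod ⇑σ x < k) ∧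
      minimalPeriod ⇑σ a = j + 1} with hS
  have hper : ∀ s : S, (⇑s.1)^[j+1] a = a := by
    intro s
    have h := Function.iterate_minimalPeriod (f := ⇑s.1) (x := a)
    rw [s.2.2] at h; exact h
  have horbcard : ∀ s : S, (orb s.1 a (j+1)).card = j + 1 :=
    fun s => orb_card s.1 a s.2.2
  have hpn : ∀ _ : S, j + 1 ≤ n := by
    intro s
    have h := Finset.card_le_univ (orb s.1 a (j+1))
    rwa [horbcard s, Fintype.card_fin] at h
  have hcompl : ∀ s : S, (orb s.1 a (j+1))ᶜ.card = n - 1 - j := by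
    intro s
    rw [Finset.card_compl, horbcard s, Fintype.card_fin]
    have := hpn s
    omega
  have hstab : ∀ s : S, ∀ x, x ∈ (orb s.1 a (j+1))ᶜ ↔ s.1 x ∈ (orb s.1 a (j+1))ᶜ :=
    fun s => orb_stab' s.1 a (Nat.succ_pos j) (hper s)
  have hgne : ∀ (s : S) (i : Fin j), (⇑s.1)^[(i:ℕ)+1] a ≠ a := by
    intro s i h
    have hinj := Function.iterate_injOn_Iio_minimalPeriod (f := ⇑s.1) (x := a)
    rw [s.2.2] at hinj
    have h0 : (⇑s.1)^[(i:ℕ)+1] a = (⇑s.1)^[0] a := by simpa using h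
    have := hinj (Set.mem_Iio.mpr (by omega)) (Set.mem_Iio.mpr (by omega)) h0
    omega
  have hginj : ∀ s : S, Function.Injective
      (fun i : Fin j => (⟨(⇑s.1)^[(i:ℕ)+1] a, hgne s i⟩ : {x : Fin n // x ≠ a})) := by
    intro s i1 i2 h
    have hinj := Function.iterate_injOn_Iio_minimalPeriod (f := ⇑s.1) (x := a)
    rw [s.2.2] at hinj
    have h' : (⇑s.1)^[(i1:ℕ)+1] a = (⇑s.1)^[(i2:ℕ)+1] a := congrArg Subtype.val h
    have := hinj (Set.mem_Iio.mpr (by omega)) (Set.mem_Iio.mpr (by omega)) h'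
    exact Fin.ext (by omega)
  let Φ : S → (Fin j ↪ {x : Fin n // x ≠ a}) ×
      {ρ : Equiv.Perm (Fin (n-1-j)) // ∀ x, minimalPeriod ⇑ρ x < k} :=
    fun s => (⟨_, hginj s⟩,
      ⟨rho _ (hcompl s) s.1 (hstab s), rho_minPer_lt _ _ _ _ s.2.1⟩)
  have hΦ : Function.Injective Φ := by
    intro s t h
    rw [Prod.mk.injEq] at h
    obtain ⟨hg, hρ⟩ := h
    have hiter : ∀ i ≤ j + 1, (⇑s.1)^[i] a = (⇑t.1)^[i] a := by
      intro i hi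
      match i, hi with
      | 0, _ => rfl
      | Nat.succ i', hi =>
        rcases Nat.lt_or_ge i' j with hij | hij
        · have h5 := congrArg
            (fun g : Fin j ↪ {x : Fin n // x ≠ a} => (g ⟨i', hij⟩ : Fin n)) hg
          simpa using h5
        · rw [show i'.succ = j + 1 by omega, hper s, hper t]
    have horb : orb s.1 a (j+1) = orb t.1 a (j+1) := by
      ext x
      simp only [mem_orb_iff]
      constructor
      · rintro ⟨i, hi, hx⟩; exact ⟨i, hi, by rw [← hiter i (by omega)]; exact hx⟩
      · rintro ⟨i, hi, hx⟩; exact ⟨i, hi, by rw [hiter i (by omega)]; exact hx⟩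
    have hstabt : ∀ x, x ∈ (orb s.1 a (j+1))ᶜ ↔ t.1 x ∈ (orb s.1 a (j+1))ᶜ := by
      rw [horb]; exact hstab t
    have hρ' : rho _ (hcompl s) s.1 (hstab s) = rho _ (hcompl s) t.1 hstabt := by
      have h2 : rho _ (hcompl t) t.1 (hstab t) = rho _ (hcompl s) t.1 hstabt :=
        rho_congr _ _ horb.symm _ _ _ _ _
      rw [← h2]
      exact Subtype.ext_iff.mp hρ
    apply Subtype.ext
    apply Equiv.ext
    intro x
    by_cases hx : x ∈ orb s.1 a (j+1)
    · obtain ⟨i, hi, rfl⟩ := mem_orb_iff.mp hx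
      have h3 : s.1 ((⇑s.1)^[i] a) = (⇑s.1)^[i+1] a :=
        (Function.iterate_succ_apply' (⇑s.1) i a).symm
      have h4 : t.1 ((⇑t.1)^[i] a) = (⇑t.1)^[i+1] a :=
        (Function.iterate_succ_apply' (⇑t.1) i a).symm
      conv_rhs => rw [hiter i (by omega)]
      rw [h4, ← hiter (i+1) (by omega)]
      exact h3
    · exact rho_eq_imp _ (hcompl s) (hcompl s) s.1 t.1 (hstab s) hstabt hρ'
        (Finset.mem_compl.mpr hx)
  have hle := Nat.card_le_card_of_injective Φ hΦ
  refine le_trans hle ?_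
  rw [Nat.card_prod]
  have hemb : Nat.card (Fin j ↪ {x : Fin n // x ≠ a}) = (n-1).descFactorial j := by
    rw [Nat.card_eq_fintype_card, Fintype.card_embedding_eq, Fintype.card_fin]
    congr 1
    rw [Fintype.card_subtype_compl, Fintype.card_fin, Fintype.card_subtype_eq]
  rw [hemb]
  rfl

end ShortCycleAux

namespace ShortCycleAux

lemma A_rec (k n : ℕ) (hn : 0 < n) :
    A k n ≤ ∑ j ∈ Finset.range (k-1), (n-1).descFactorial j * A k (n-1-j) := by
  let T : ℕ → Type := fun j => {σ : Equiv.Perm (Fin n) //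
      (∀ x, minimalPeriod ⇑σ x < k) ∧ minimalPeriod ⇑σ ⟨0, hn⟩ = j + 1}
  have step1 : A k n ≤ ∑ j ∈ Finset.range (k-1), Nat.card (T j) := by
    have hψ : ∀ σ : {σ : Equiv.Perm (Fin n) // ∀ x, minimalPeriod ⇑σ x < k},
        minimalPeriod ⇑σ.1 ⟨0, hn⟩ - 1 < k - 1 ∧
          minimalPeriod ⇑σ.1 ⟨0, hn⟩ - 1 + 1 = minimalPeriod ⇑σ.1 ⟨0, hn⟩ := by
      intro σ
      have h1 := perm_minPer_pos σ.1 ⟨0, hn⟩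
      have h2 := σ.2 ⟨0, hn⟩
      omega
    let ψ : {σ : Equiv.Perm (Fin n) // ∀ x, minimalPeriod ⇑σ x < k} →
        Σ j : Fin (k-1), T (j:ℕ) :=
      fun σ => ⟨⟨minimalPeriod ⇑σ.1 ⟨0, hn⟩ - 1, (hψ σ).1⟩, ⟨σ.1, σ.2, ((hψ σ).2).symm⟩⟩
    have hinj : Function.Injective ψ := by
      intro s t h
      have h2 := congrArg (fun z : (Σ j : Fin (k-1), T (j:ℕ)) => z.2.1) h
      exact Subtype.ext h2
    calc A k n ≤ Nat.card (Σ j : Fin (k-1), T (j:ℕ)) :=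
          Nat.card_le_card_of_injective ψ hinj
      _ = ∑ j : Fin (k-1), Nat.card (T (j:ℕ)) := natCard_sigma _
      _ = ∑ j ∈ Finset.range (k-1), Nat.card (T j) := Fin.sum_univ_eq_sum_range (fun j => Nat.card (T j)) (k-1)
  refine le_trans step1 (Finset.sum_le_sum ?_)
  intro j hj
  rw [Finset.mem_range] at hj
  exact card_fixed_j k n j hn (by omega)

lemma A_key (k : ℕ) (hk : 2 ≤ k) : ∀ n, A k n * (n/(k-1)).factorial ≤ n.factorial := by
  intro n
  induction n using Nat.strong_induction_on with
  | _ n ih =>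
    rcases Nat.eq_zero_or_pos (n/(k-1)) with ht | ht
    · rw [ht]; simpa using A_le k n
    · have hk1 : 0 < k - 1 := by omega
      have hkn : k - 1 ≤ n := by
        by_contra hc
        push_neg at hc
        rw [Nat.div_eq_of_lt hc] at ht; omega
      have hn : 0 < n := by omega
      set t := n/(k-1) with htt
      have htk : t * (k-1) ≤ n := Nat.div_mul_le_self n (k-1)
      have hterm : ∀ j ∈ Finset.range (k-1),
          (n-1).descFactorial j * A k (n-1-j) * (t-1).factorial ≤ (n-1).factorial := by
        intro j hj
        rw [Finset.mem_range] at hj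
        have hm : n - 1 - j < n := by omega
        have hIH := ih (n-1-j) hm
        have hdiv : t - 1 ≤ (n-1-j)/(k-1) := by
          rw [Nat.le_div_iff_mul_le hk1]
          have e1 : (t-1)*(k-1) = t*(k-1) - (k-1) := Nat.sub_one_mul t (k-1)
          omega
        have hf : (t-1).factorial ≤ ((n-1-j)/(k-1)).factorial := Nat.factorial_le hdiv
        calc (n-1).descFactorial j * A k (n-1-j) * (t-1).factorial
            ≤ (n-1).descFactorial j * (A k (n-1-j) * ((n-1-j)/(k-1)).factorial) := by
              rw [mul_assoc]
              exact Nat.mul_le_mul_left _ (Nat.mul_le_mul_left _ hf)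
          _ ≤ (n-1).descFactorial j * (n-1-j).factorial := Nat.mul_le_mul_left _ hIH
          _ = (n-1).factorial := by
              rw [mul_comm]
              exact Nat.factorial_mul_descFactorial (by omega)
      have h1 : A k n * (t-1).factorial ≤ (k-1) * (n-1).factorial := by
        calc A k n * (t-1).factorial
            ≤ (∑ j ∈ Finset.range (k-1), (n-1).descFactorial j * A k (n-1-j)) *
                (t-1).factorial := Nat.mul_le_mul_right _ (A_rec k n hn)
          _ = ∑ j ∈ Finset.range (k-1),
                (n-1).descFactorial j * A k (n-1-j) * (t-1).factorial := by
              rw [Finset.sum_mul]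
          _ ≤ ∑ _j ∈ Finset.range (k-1), (n-1).factorial := Finset.sum_le_sum hterm
          _ = (k-1) * (n-1).factorial := by
              rw [Finset.sum_const, Finset.card_range, smul_eq_mul]
      have h2 : A k n * t.factorial = A k n * (t-1).factorial * t := by
        rw [mul_assoc, ← Nat.mul_factorial_pred ht.ne', mul_comm (t) _]
      rw [h2]
      calc A k n * (t-1).factorial * t ≤ (k-1) * (n-1).factorial * t :=
            Nat.mul_le_mul_right _ h1
        _ = (t * (k-1)) * (n-1).factorial := by ring
        _ ≤ n * (n-1).factorial := Nat.mul_le_mul_right _ htk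
        _ = n.factorial := Nat.mul_factorial_pred hn.ne'

end ShortCycleAux

/-- The probability that a uniformly random permutation of an `n`-set has all
cycles of length strictly less than `k`. -/
noncomputable def shortCycleProb (k n : ℕ) : ℝ :=
  (Nat.card {σ : Equiv.Perm (Fin n) // ∀ x, Function.minimalPeriod (⇑σ) x < k} : ℝ) /
    Nat.factorial n

theorem shortCycleProb_le (k n : ℕ) (hk : 2 ≤ k) :
    shortCycleProb k n ≤ 1 / Nat.factorial (n / (k - 1)) := by
  have key := ShortCycleAux.A_key k hk n
  rw [shortCycleProb]
  rw [div_le_div_iff₀ (by positivity) (by positivity)]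
  show (ShortCycleAux.A k n : ℝ) * _ ≤ _
  rw [one_mul]
  exact_mod_cast key
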